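/- The 'accepts everything' problem is Π₂-hard in the following concrete sense: there is a total computable function r such that for every code e, dom(eval (r e)) = ℕ if and only if dom(eval e) is infinite. -/

import Mathlib

open Nat.Partrec (Code)
open Nat.Partrec.Code

namespace AcceptsEverythingAux

/-- the list of inputs `m < k` on which `e` halts within `k` steps -/
def wit (e : Code) (k : ℕ) : List ℕ :=
  (List.range k).filterMap fun m => if (Code.evaln k e m).isSome then some m else none

lemma mem_wit {e : Code} {k m : ℕ} :
    m ∈ wit e k ↔ m < k ∧ (Code.evaln k e m).isSome := by
  simp only [wit, List.mem_filterMap, List.mem_range]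
  constructor
  · rintro ⟨a, ha, h⟩
    split at h
    · cases h; exact ⟨ha, by assumption⟩
    · cases h
  · rintro ⟨h1, h2⟩
    exact ⟨m, h1, by simp [h2]⟩

lemma wit_nodup (e : Code) (k : ℕ) : (wit e k).Nodup := by
  apply List.Nodup.filterMap _ List.nodup_range
  rintro a a' b h h'
  split at h
  · cases h
    split at h'
    · cases h'; rfl
    · cases h'
  · cases h

lemma wit_primrec :
    Primrec₂ fun (p : Code × ℕ) (k : ℕ) => (decide (p.2 < (wit p.1 k).length) : Bool) := by
  have he : Primrec fun x : ((Code × ℕ) × ℕ) × ℕ => Code.evaln x.1.2 x.1.1.1 x.2 :=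
    Code.primrec_evaln.comp
      (Primrec.pair (Primrec.pair (Primrec.snd.comp Primrec.fst)
        (Primrec.fst.comp (Primrec.fst.comp Primrec.fst))) Primrec.snd)
  have hg : Primrec₂ fun (p : (Code × ℕ) × ℕ) (m : ℕ) =>
      if (Code.evaln p.2 p.1.1 m).isSome then some m else none := by
    refine (Primrec.cond (Primrec.option_isSome.comp he)
      (Primrec.option_some.comp Primrec.snd) (Primrec.const none)).of_eq ?_
    rintro ⟨p, m⟩
    by_cases h : (Code.evaln p.2 p.1.1 m).isSome <;> simp [h]
  have hl : Primrec fun p : (Code × ℕ) × ℕ => (wit p.1.1 p.2).length :=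
    Primrec.list_length.comp
      (Primrec.listFilterMap (Primrec.list_range.comp Primrec.snd) hg)
  exact (Primrec.nat_lt.comp (Primrec.snd.comp Primrec.fst) hl).decide |>.to₂

/-- `e` halts within `k` steps on more than `n` inputs, for some `k`,
iff the domain of `e` is infinite. -/
lemma key (e : Code) :
    (∀ n : ℕ, ∃ k, n < (wit e k).length) ↔ {n | (e.eval n).Dom}.Infinite := by
  constructor
  · intro h
    rw [Set.infinite_coe_iff.symm, Set.infinite_coe_iff]
    by_contra hfin
    rw [Set.not_infinite] at hfin
    obtain ⟨k, hk⟩ := h hfin.toFinset.card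
    have hsub : (wit e k).toFinset ⊆ hfin.toFinset := by
      intro m hm
      rw [List.mem_toFinset, mem_wit] at hm
      obtain ⟨x, hx⟩ := Option.isSome_iff_exists.1 hm.2
      have : x ∈ e.eval m := Code.evaln_sound hx
      rw [Set.Finite.mem_toFinset]
      exact Part.dom_iff_mem.2 ⟨x, this⟩
    have := Finset.card_le_card hsub
    rw [List.toFinset_card_of_nodup (wit_nodup e k)] at this
    omega
  · intro hinf n
    obtain ⟨s, hs, hcard⟩ := hinf.exists_subset_card_eq (n + 1)
    have hex : ∀ m ∈ s, ∃ k x, x ∈ Code.evaln k e m := by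
      intro m hm
      obtain ⟨x, hx⟩ := Part.dom_iff_mem.1 (hs hm)
      obtain ⟨k, hk⟩ := Code.evaln_complete.1 hx
      exact ⟨k, x, hk⟩
    choose km xm hkm using hex
    let K := s.sup fun m => if h : m ∈ s then max (m + 1) (km m h) else 0
    have hK : ∀ m (hm : m ∈ s), m < K ∧ (Code.evaln K e m).isSome := by
      intro m hm
      have hle : max (m + 1) (km m hm) ≤ K := by
        have := Finset.le_sup (f := fun m => if h : m ∈ s then max (m + 1) (km m h) else 0) hm
        simp only [dif_pos hm] at this
        exact this
      refine ⟨by omega, ?_⟩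
      exact Option.isSome_iff_exists.2
        ⟨xm m hm, Code.evaln_mono (le_trans (le_max_right _ _) hle) (hkm m hm)⟩
    refine ⟨K, ?_⟩
    have hsub : s ⊆ (wit e K).toFinset := by
      intro m hm
      rw [List.mem_toFinset, mem_wit]
      exact hK m hm
    have := Finset.card_le_card hsub
    rw [List.toFinset_card_of_nodup (wit_nodup e K), hcard] at this
    omega

end AcceptsEverythingAux

/-- Π₂-hardness of 'accepts everything': a total computable `r` with
`dom(eval (r e)) = ℕ` iff `dom(eval e)` is infinite. -/
theorem accepts_everything_pi2_hard :
    ∃ r : Code → Code, Computable r ∧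
      ∀ e : Code,
        {n | ((r e).eval n).Dom} = Set.univ ↔ {n | (e.eval n).Dom}.Infinite := by
  classical
  open AcceptsEverythingAux in
  -- the dovetailing search as a partial function of (e, n)
  have hF : Partrec fun p : Code × ℕ =>
      Nat.rfind fun k => Part.some (decide (p.2 < (wit p.1 k).length)) :=
    Partrec.rfind (wit_primrec.to_comp.partrec₂)
  -- turn it into a single code acting on paired inputs
  have hf : Partrec fun x : ℕ =>
      Nat.rfind fun k =>
        Part.some (decide (x.unpair.2 < (wit (Denumerable.ofNat Code x.unpair.1) k).length)) := by
    exact hF.comp (Computable.pair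
      ((Computable.ofNat Code).comp (Computable.fst.comp Computable.unpair))
      (Computable.snd.comp Computable.unpair))
  obtain ⟨c, hc⟩ := Code.exists_code.1 (Partrec.nat_iff.1 hf)
  obtain ⟨s, hs, hse⟩ := Code.smn
  refine ⟨fun e => s c (Encodable.encode e), (hs.comp (Computable.const c)
    Computable.encode), ?_⟩
  intro e
  have heval : ∀ n : ℕ, (s c (Encodable.encode e)).eval n =
      Nat.rfind fun k => Part.some (decide (n < (wit e k).length)) := by
    intro n
    rw [hse, hc]
    simp [Nat.unpair_pair, Denumerable.ofNat_encode]
  rw [← key e]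
  constructor
  · intro h n
    have : (Nat.rfind fun k => Part.some (decide (n < (wit e n).length))).Dom → True := fun _ => trivial
    have hn : n ∈ {n | ((s c (Encodable.encode e)).eval n).Dom} := by rw [h]; trivial
    simp only [Set.mem_setOf_eq, heval] at hn
    obtain ⟨k, hk, -⟩ := Nat.rfind_dom.1 hn
    refine ⟨k, ?_⟩
    simpa using hk
  · intro h
    ext n
    simp only [Set.mem_setOf_eq, Set.mem_univ, iff_true, heval]
    obtain ⟨k, hk⟩ := h n
    refine Nat.rfind_dom.2 ?_
    exact ⟨k, by simpa using hk, fun _ => trivial⟩
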